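/- Let F be an invertible real 3×3 matrix and H any real 3×3 matrix. For each real t, the matrix (F + t·H)ᵀ(F + t·H) is positive semidefinite, and the function t ↦ trace( sqrt( (F + t·H)ᵀ(F + t·H) ) ), where sqrt denotes the unique positive semidefinite square root, is differentiable at t = 0 with derivative trace(Rᵀ·H), where R = F · (sqrt(Fᵀ F))⁻¹. That is, the gradient of the invariant I₁(F) = trace(S) with respect to F is the rotation factor R of the polar decomposition F = R·S. -/

import Mathlib

open Matrix

section PSDSqrt

open scoped ComplexOrder

/-- The positive semidefinite square root of a positive semidefinite matrix
(definition from Mathlib of December 2024, since removed from Mathlib). -/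
noncomputable def Matrix.PosSemidef.sqrt {n 𝕜 : Type*} [Fintype n] [RCLike 𝕜] [DecidableEq n]
    {A : Matrix n n 𝕜} (hA : A.PosSemidef) : Matrix n n 𝕜 :=
  hA.1.eigenvectorUnitary.1 * diagonal ((↑) ∘ (√·) ∘ hA.1.eigenvalues) *
  (star hA.1.eigenvectorUnitary : Matrix n n 𝕜)

end PSDSqrt

section PSDSqrtAux

open scoped ComplexOrder MatrixOrder

theorem Matrix.PosSemidef.sqrt_eq_cfcSqrt {n : Type*} [Fintype n] [DecidableEq n]
    {A : Matrix n n ℝ} (hA : A.PosSemidef) : hA.sqrt = CFC.sqrt A := by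
  rw [CFC.sqrt_eq_real_sqrt A hA.nonneg, cfcₙ_eq_cfc (hf0 := Real.sqrt_zero), hA.1.cfc_eq,
    IsHermitian.cfc, Unitary.conjStarAlgAut_apply]
  rfl

theorem Matrix.PosSemidef.posSemidef_sqrt {n : Type*} [Fintype n] [DecidableEq n]
    {A : Matrix n n ℝ} (hA : A.PosSemidef) : hA.sqrt.PosSemidef := by
  rw [hA.sqrt_eq_cfcSqrt]
  exact nonneg_iff_posSemidef.mp (CFC.sqrt_nonneg A)

theorem Matrix.PosSemidef.sqrt_mul_self {n : Type*} [Fintype n] [DecidableEq n]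
    {A : Matrix n n ℝ} (hA : A.PosSemidef) : hA.sqrt * hA.sqrt = A := by
  rw [hA.sqrt_eq_cfcSqrt]
  exact CFC.sqrt_mul_sqrt_self A hA.nonneg

theorem Matrix.PosSemidef.eq_sqrt_of_sq_eq {n : Type*} [Fintype n] [DecidableEq n]
    {A B : Matrix n n ℝ} (hA : A.PosSemidef) (hB : B.PosSemidef) (hAB : A ^ 2 = B) :
    A = hB.sqrt := by
  rw [hB.sqrt_eq_cfcSqrt]
  exact (CFC.sqrt_unique (by rw [← pow_two]; exact hAB) hA.nonneg).symm

end PSDSqrtAux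

attribute [local instance] Matrix.linftyOpNormedRing Matrix.linftyOpNormedAlgebra
  Matrix.linftyOpNormedSpace

theorem sylv_inj {n : Type*} [Fintype n] [DecidableEq n] {S V : Matrix n n ℝ}
    (hS : S.PosDef) (h : V * S + S * V = 0) : V = 0 := by
  have hH : S.IsHermitian := hS.isHermitian
  set U : Matrix n n ℝ := (hH.eigenvectorUnitary : Matrix n n ℝ) with hU
  have hspec : S = U * diagonal (RCLike.ofReal ∘ hH.eigenvalues) * star U := hH.spectral_theorem
  have hUU : star U * U = 1 := (Matrix.mem_unitaryGroup_iff').mp hH.eigenvectorUnitary.2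
  have hUU' : U * star U = 1 := (Matrix.mem_unitaryGroup_iff).mp hH.eigenvectorUnitary.2
  set d : n → ℝ := hH.eigenvalues
  have hdiag : RCLike.ofReal ∘ hH.eigenvalues = d := rfl
  set W : Matrix n n ℝ := star U * V * U with hW
  have key : W * diagonal d + diagonal d * W = 0 := by
    have h0 : star U * (V * S + S * V) * U = 0 := by rw [h]; simp
    rw [hspec, hdiag] at h0
    have h1 : star U * (V * (U * diagonal d * star U) + (U * diagonal d * star U) * V) * U
        = W * diagonal d * (star U * U) + (star U * U) * (diagonal d * W) := by
      rw [hW]; noncomm_ring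
    rw [h1, hUU] at h0
    simpa using h0
  have hW0 : W = 0 := by
    ext i j
    have h2 := congrFun (congrFun key i) j
    simp only [Matrix.add_apply, Matrix.mul_diagonal, Matrix.diagonal_mul, Matrix.zero_apply] at h2
    have h3 : W i j * (d i + d j) = 0 := by linear_combination h2
    have h4 : 0 < d i + d j := by
      have := hS.eigenvalues_pos i; have := hS.eigenvalues_pos j
      dsimp [d]; linarith
    have := mul_eq_zero.mp h3
    simpa [h4.ne'] using this
  have hV : V = U * W * star U := by
    calc V = (U * star U) * V * (U * star U) := by rw [hUU']; simp
    _ = U * (star U * V * U) * star U := by noncomm_ring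
  rw [hV, hW0]; simp

theorem psd_stable {n : Type*} [Fintype n] [DecidableEq n] [Nonempty n]
    {S : Matrix n n ℝ} (hS : S.PosDef) :
    ∃ ε > 0, ∀ M : Matrix n n ℝ, M.IsHermitian → ‖M - S‖ < ε → M.PosSemidef := by
  classical
  set R := hS.posSemidef.sqrt with hR
  have hRR : R * R = S := hS.posSemidef.sqrt_mul_self
  have hRher : R.IsHermitian := hS.posSemidef.posSemidef_sqrt.1
  have hdetR : IsUnit R.det := by
    have h1 : R.det * R.det = S.det := by rw [← det_mul, hRR]
    have h2 : S.det ≠ 0 := hS.det_pos.ne'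
    exact isUnit_iff_ne_zero.mpr (fun h => h2 (by rw [← h1, h, mul_zero]))
  have hRinv : R⁻¹ * R = 1 := nonsing_inv_mul R hdetR
  have hRinv' : R * R⁻¹ = 1 := mul_nonsing_inv R hdetR
  have hnormpos : 0 < ‖R⁻¹‖ := by
    rw [norm_pos_iff]
    intro h0
    have : (1 : Matrix n n ℝ) = 0 := by rw [← hRinv, h0, Matrix.zero_mul]
    exact one_ne_zero this
  set cR := ‖R⁻¹‖ with hcR
  -- lower bound for the quadratic form of S
  have hlow : ∀ x : n → ℝ, (‖x‖ / cR) ^ 2 ≤ x ⬝ᵥ S *ᵥ x := by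
    intro x
    set y := R *ᵥ x with hy
    have hxy : x = R⁻¹ *ᵥ y := by rw [hy, Matrix.mulVec_mulVec, hRinv, Matrix.one_mulVec]
    have hxley : ‖x‖ ≤ cR * ‖y‖ := by
      rw [hxy]; exact Matrix.linfty_opNorm_mulVec _ _
    have hq : x ⬝ᵥ S *ᵥ x = y ⬝ᵥ y := by
      rw [← hRR, ← Matrix.mulVec_mulVec, Matrix.dotProduct_mulVec]
      congr 1
      conv_lhs => rw [← hRher.eq, conjTranspose_eq_transpose_of_trivial, vecMul_transpose]
    have hyy : ‖y‖ ^ 2 ≤ y ⬝ᵥ y := by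
      have h1 : ‖y‖ ≤ Real.sqrt (y ⬝ᵥ y) := by
        rw [pi_norm_le_iff_of_nonneg (Real.sqrt_nonneg _)]
        intro i
        rw [Real.norm_eq_abs, ← Real.sqrt_sq_eq_abs]
        apply Real.sqrt_le_sqrt
        unfold y
        rw [dotProduct]
        have : ∀ j, 0 ≤ y j * y j := fun j => mul_self_nonneg _
        calc y i ^ 2 = y i * y i := sq _
          _ ≤ ∑ j, y j * y j := Finset.single_le_sum (fun j _ => this j) (Finset.mem_univ i)
      calc ‖y‖ ^ 2 ≤ Real.sqrt (y ⬝ᵥ y) ^ 2 := by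
            apply pow_le_pow_left₀ (norm_nonneg _) h1
        _ = y ⬝ᵥ y := Real.sq_sqrt (by
            rw [dotProduct]; exact Finset.sum_nonneg fun j _ => mul_self_nonneg _)
    have : ‖x‖ / cR ≤ ‖y‖ := by
      rw [div_le_iff₀ hnormpos] at *
      calc ‖x‖ ≤ cR * ‖y‖ := hxley
        _ = ‖y‖ * cR := mul_comm _ _
    calc (‖x‖ / cR) ^ 2 ≤ ‖y‖ ^ 2 := pow_le_pow_left₀ (by positivity) this 2
      _ ≤ y ⬝ᵥ y := hyy
      _ = x ⬝ᵥ S *ᵥ x := hq.symm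
  -- perturbation bound
  set N : ℝ := (Fintype.card n : ℝ) with hN
  have hNpos : (0:ℝ) < N := by
    simp [hN, Fintype.card_pos]
  have hpert : ∀ (E : Matrix n n ℝ) (x : n → ℝ), |x ⬝ᵥ E *ᵥ x| ≤ N * ‖E‖ * ‖x‖ ^ 2 := by
    intro E x
    calc |x ⬝ᵥ E *ᵥ x| ≤ ∑ i, |x i * (E *ᵥ x) i| := Finset.abs_sum_le_sum_abs _ _
      _ ≤ ∑ _i : n, ‖x‖ * (‖E‖ * ‖x‖) := by
          apply Finset.sum_le_sum
          intro i _
          rw [abs_mul]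
          have h1 : |x i| ≤ ‖x‖ := norm_le_pi_norm x i
          have h2 : |(E *ᵥ x) i| ≤ ‖E *ᵥ x‖ := by
            rw [← Real.norm_eq_abs]; exact norm_le_pi_norm _ i
          have h3 : ‖E *ᵥ x‖ ≤ ‖E‖ * ‖x‖ := Matrix.linfty_opNorm_mulVec _ _
          exact mul_le_mul h1 (h2.trans h3) (abs_nonneg _) (norm_nonneg _)
      _ = N * ‖E‖ * ‖x‖ ^ 2 := by
          rw [Finset.sum_const, Finset.card_univ]; push_cast [hN]; ring
  refine ⟨(cR ^ 2)⁻¹ / N, by positivity, fun M hM hclose => ?_⟩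
  refine Matrix.PosSemidef.of_dotProduct_mulVec_nonneg hM fun x => ?_
  rw [star_trivial]
  have h1 := hlow x
  have h2 := hpert (M - S) x
  have h3 : x ⬝ᵥ M *ᵥ x = x ⬝ᵥ S *ᵥ x + x ⬝ᵥ (M - S) *ᵥ x := by
    rw [Matrix.sub_mulVec, dotProduct_sub]; ring
  have h4 : N * ‖M - S‖ * ‖x‖ ^ 2 ≤ (cR ^ 2)⁻¹ * ‖x‖ ^ 2 := by
    apply mul_le_mul_of_nonneg_right _ (by positivity)
    calc N * ‖M - S‖ ≤ N * ((cR ^ 2)⁻¹ / N) := by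
          apply mul_le_mul_of_nonneg_left hclose.le hNpos.le
      _ = (cR ^ 2)⁻¹ := by field_simp
  have h5 : (‖x‖ / cR) ^ 2 = (cR ^ 2)⁻¹ * ‖x‖ ^ 2 := by
    rw [div_pow, div_eq_inv_mul]
  have h6 : |x ⬝ᵥ (M - S) *ᵥ x| ≤ (cR ^ 2)⁻¹ * ‖x‖ ^ 2 := h2.trans h4
  rw [h3]
  rw [h5] at h1
  have h7 := (abs_le.mp h6).1
  linarith

/-- For invertible `F`, each `(F + tH)ᵀ(F + tH)` is positive semidefinite, and
`t ↦ trace(sqrt((F + tH)ᵀ(F + tH)))` is differentiable at `0` with derivative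
`trace(RᵀH)` where `R = F · (sqrt(FᵀF))⁻¹` is the rotation factor of the polar
decomposition of `F`: the gradient of `I₁(F) = trace(S)` is `R`. -/
theorem I1_gradient (F H : Matrix (Fin 3) (Fin 3) ℝ) (hF : IsUnit F.det) :
    ∃ (hps : ∀ t : ℝ, ((F + t • H)ᵀ * (F + t • H)).PosSemidef)
      (hFF : (Fᵀ * F).PosSemidef),
      HasDerivAt (fun t : ℝ => ((hps t).sqrt).trace)
        (((F * hFF.sqrt⁻¹)ᵀ * H).trace) 0 := by
  classical
  have hps : ∀ t : ℝ, ((F + t • H)ᵀ * (F + t • H)).PosSemidef := by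
    intro t
    simpa [conjTranspose_eq_transpose_of_trivial] using
      Matrix.posSemidef_conjTranspose_mul_self (F + t • H)
  have hFF : (Fᵀ * F).PosSemidef := by simpa using hps 0
  refine ⟨hps, hFF, ?_⟩
  set S₀ : (Matrix (Fin 3) (Fin 3) ℝ) := hFF.sqrt with hS₀
  have hS₀psd : S₀.PosSemidef := hFF.posSemidef_sqrt
  have hS₀sq : S₀ * S₀ = Fᵀ * F := hFF.sqrt_mul_self
  have hdet : IsUnit S₀.det := by
    have h1 : S₀.det * S₀.det = Fᵀ.det * F.det := by rw [← det_mul, hS₀sq, det_mul]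
    have h2 : IsUnit (S₀.det * S₀.det) := by
      rw [h1]; exact ((by rw [det_transpose]; exact hF : IsUnit Fᵀ.det)).mul hF
    exact isUnit_of_mul_isUnit_left h2
  have hS₀pd : S₀.PosDef := by
    refine Matrix.PosDef.of_dotProduct_mulVec_pos hS₀psd.1 fun x hx =>
      lt_of_le_of_ne (hS₀psd.dotProduct_mulVec_nonneg x) fun heq => hx ?_
    have h0 : S₀ *ᵥ x = 0 := (hS₀psd.dotProduct_mulVec_zero_iff x).mp heq.symm
    have hinj : Function.Injective (S₀.mulVec) :=
      (Matrix.mulVec_injective_iff_isUnit).mpr ((Matrix.isUnit_iff_isUnit_det S₀).mpr hdet)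
    have := hinj (a₁ := x) (a₂ := 0) (by simpa using h0)
    exact this
  have hS₀inv : S₀⁻¹ * S₀ = 1 := nonsing_inv_mul S₀ hdet
  have hS₀inv' : S₀ * S₀⁻¹ = 1 := mul_nonsing_inv S₀ hdet
  have hS₀symm : S₀ᵀ = S₀ := by
    have := hS₀psd.1
    rwa [IsHermitian, conjTranspose_eq_transpose_of_trivial] at this
  -- the Sylvester operator
  set L : (Matrix (Fin 3) (Fin 3) ℝ) →ₗ[ℝ] (Matrix (Fin 3) (Fin 3) ℝ) :=
    { toFun := fun V => V * S₀ + S₀ * V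
      map_add' := fun a b => by noncomm_ring
      map_smul' := fun c a => by simp [Matrix.smul_mul, Matrix.mul_smul, smul_add] } with hL
  have hLinj : Function.Injective L := by
    rw [← LinearMap.ker_eq_bot, LinearMap.ker_eq_bot']
    intro V hV
    exact sylv_inj hS₀pd hV
  have hLbij : Function.Bijective L :=
    ⟨hLinj, (LinearMap.injective_iff_surjective).mp hLinj⟩
  set e : (Matrix (Fin 3) (Fin 3) ℝ) ≃ₗ[ℝ] (Matrix (Fin 3) (Fin 3) ℝ) := LinearEquiv.ofBijective L hLbij with he
  set eC : (Matrix (Fin 3) (Fin 3) ℝ) ≃L[ℝ] (Matrix (Fin 3) (Fin 3) ℝ) := e.toContinuousLinearEquiv with heC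
  have heCapp : ∀ V : (Matrix (Fin 3) (Fin 3) ℝ), eC V = V * S₀ + S₀ * V := fun V => rfl
  -- the squaring map has invertible strict derivative eC at S₀
  have hsq : HasStrictFDerivAt (fun X : (Matrix (Fin 3) (Fin 3) ℝ) => X * X) (eC : (Matrix (Fin 3) (Fin 3) ℝ) →L[ℝ] (Matrix (Fin 3) (Fin 3) ℝ)) S₀ := by
    have h1 : HasStrictFDerivAt (fun X : (Matrix (Fin 3) (Fin 3) ℝ) => X * X)
        (S₀ • (ContinuousLinearMap.id ℝ (Matrix (Fin 3) (Fin 3) ℝ)) +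
          (ContinuousLinearMap.id ℝ (Matrix (Fin 3) (Fin 3) ℝ)).smulRight S₀) S₀ :=
      (hasStrictFDerivAt_id S₀).mul' (hasStrictFDerivAt_id S₀)
    convert h1 using 1
    refine ContinuousLinearMap.ext fun V => ?_
    show eC V = S₀ • V + V • S₀
    rw [heCapp V, smul_eq_mul, smul_eq_mul, add_comm]
  set g : (Matrix (Fin 3) (Fin 3) ℝ) → (Matrix (Fin 3) (Fin 3) ℝ) := hsq.localInverse _ _ _ with hg
  -- the curve A t
  set A : ℝ → (Matrix (Fin 3) (Fin 3) ℝ) := fun t => (F + t • H)ᵀ * (F + t • H) with hA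
  have hA0 : A 0 = S₀ * S₀ := by simp [hA, hS₀sq]
  set B : (Matrix (Fin 3) (Fin 3) ℝ) := Hᵀ * F + Fᵀ * H with hB
  have hAd : HasDerivAt A B 0 := by
    have hc : HasDerivAt (fun t : ℝ => F + t • H) H 0 := by
      have := ((hasDerivAt_id (0 : ℝ)).smul_const H).const_add F
      rw [one_smul] at this; exact this
    have hT : HasDerivAt (fun t : ℝ => (F + t • H)ᵀ) Hᵀ 0 := by
      have hTl : HasFDerivAt (fun X : (Matrix (Fin 3) (Fin 3) ℝ) => Xᵀ)
          ((Matrix.transposeLinearEquiv (Fin 3) (Fin 3) ℝ ℝ).toLinearMap.toContinuousLinearMap)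
          (F + (0:ℝ) • H) :=
        ((Matrix.transposeLinearEquiv (Fin 3) (Fin 3) ℝ
          ℝ).toLinearMap.toContinuousLinearMap).hasFDerivAt
      exact hTl.comp_hasDerivAt 0 hc
    have := hT.mul hc
    have key : B = Hᵀ * (F + (0:ℝ) • H) + (F + (0:ℝ) • H)ᵀ * H := by simp [hB]
    rw [key]; exact this
  -- derivative of t ↦ g (A t)
  have hgd : HasStrictFDerivAt g (eC.symm : (Matrix (Fin 3) (Fin 3) ℝ) →L[ℝ] (Matrix (Fin 3) (Fin 3) ℝ)) (A 0) := by
    rw [hA0]; exact hsq.to_localInverse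
  have hφ : HasDerivAt (fun t => g (A t)) (eC.symm B) 0 :=
    hgd.hasFDerivAt.comp_hasDerivAt 0 hAd
  have htrace : HasDerivAt (fun t => (g (A t)).trace) ((eC.symm B)).trace 0 :=
    ((Matrix.traceLinearMap (Fin 3) ℝ ℝ).toContinuousLinearMap).hasFDerivAt.comp_hasDerivAt 0 hφ
  -- eventual equality with the sqrt function
  have hXt : Filter.Tendsto (fun t => g (A t)) (nhds 0) (nhds S₀) := by
    have h1 : ContinuousAt g (A 0) := by
      rw [hA0]; exact hsq.localInverse_continuousAt
    have h2 : g (A 0) = S₀ := by rw [hA0]; exact hsq.localInverse_apply_image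
    have h3 := h1.tendsto.comp hAd.continuousAt.tendsto
    rw [h2] at h3
    exact h3
  have hright : ∀ᶠ t in nhds (0:ℝ), g (A t) * g (A t) = A t := by
    have h1 : ∀ᶠ y in nhds (A 0), g y * g y = y := by
      rw [hA0]; exact hsq.eventually_right_inverse
    exact hAd.continuousAt.tendsto.eventually h1
  have hleft : ∀ᶠ x in nhds S₀, g (x * x) = x := hsq.eventually_left_inverse
  have hAsymm : ∀ t : ℝ, (A t)ᵀ = A t := by
    intro t
    have := (hps t).1
    rwa [IsHermitian, conjTranspose_eq_transpose_of_trivial] at this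
  have hXTt : Filter.Tendsto (fun t => (g (A t))ᵀ) (nhds 0) (nhds S₀) := by
    have hc : Continuous (fun X : (Matrix (Fin 3) (Fin 3) ℝ) => Xᵀ) :=
      ((Matrix.transposeLinearEquiv (Fin 3) (Fin 3) ℝ ℝ).toLinearMap.toContinuousLinearMap).continuous
    have := hc.continuousAt.tendsto.comp hXt
    simpa [hS₀symm, Function.comp_def] using this
  have hsymm : ∀ᶠ t in nhds (0:ℝ), (g (A t))ᵀ = g (A t) := by
    filter_upwards [hright, hXTt.eventually hleft] with t h1 h2
    have h3 : (g (A t))ᵀ * (g (A t))ᵀ = A t := by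
      rw [← Matrix.transpose_mul, h1, hAsymm]
    rw [h3] at h2
    exact h2.symm
  have hpsdev : ∀ᶠ t in nhds (0:ℝ), (g (A t)).PosSemidef := by
    obtain ⟨ε, hε, hstab⟩ := psd_stable hS₀pd
    have hball : ∀ᶠ t in nhds (0:ℝ), ‖g (A t) - S₀‖ < ε := by
      have := hXt.eventually (Metric.ball_mem_nhds S₀ hε)
      simpa [Metric.mem_ball, dist_eq_norm] using this
    filter_upwards [hball, hsymm] with t h1 h2
    exact hstab _ (by rwa [IsHermitian, conjTranspose_eq_transpose_of_trivial]) h1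
  have hev : ∀ᶠ t in nhds (0:ℝ), (hps t).sqrt = g (A t) := by
    filter_upwards [hright, hpsdev] with t h1 h2
    exact ((h2.eq_sqrt_of_sq_eq (hps t) (by rw [pow_two, h1]))).symm
  -- transfer the derivative
  have hfinal : HasDerivAt (fun t : ℝ => ((hps t).sqrt).trace) ((eC.symm B)).trace 0 := by
    apply htrace.congr_of_eventuallyEq
    filter_upwards [hev] with t h1
    rw [h1]
  -- compute the derivative value
  have hval : ((eC.symm B)).trace = ((F * S₀⁻¹)ᵀ * H).trace := by
    set V : (Matrix (Fin 3) (Fin 3) ℝ) := eC.symm B with hV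
    have hLV : V * S₀ + S₀ * V = B := by
      have := eC.apply_symm_apply B
      rwa [heCapp] at this
    have htr1 : (S₀⁻¹ * B).trace = 2 * V.trace := by
      rw [← hLV, Matrix.mul_add, trace_add]
      have e1 : (S₀⁻¹ * (V * S₀)).trace = V.trace := by
        rw [← Matrix.mul_assoc, trace_mul_cycle, hS₀inv', Matrix.one_mul]
      have e2 : (S₀⁻¹ * (S₀ * V)).trace = V.trace := by
        rw [← Matrix.mul_assoc, hS₀inv, Matrix.one_mul]
      rw [e1, e2]; ring
    have htr2 : (S₀⁻¹ * B).trace = 2 * ((F * S₀⁻¹)ᵀ * H).trace := by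
      have hinvT : (S₀⁻¹)ᵀ = S₀⁻¹ := by
        rw [Matrix.transpose_nonsing_inv, hS₀symm]
      have hR : (F * S₀⁻¹)ᵀ * H = S₀⁻¹ * Fᵀ * H := by
        rw [Matrix.transpose_mul, hinvT]
      have e3 : (S₀⁻¹ * (Hᵀ * F)).trace = (S₀⁻¹ * (Fᵀ * H)).trace := by
        rw [← trace_transpose (S₀⁻¹ * (Hᵀ * F))]
        rw [Matrix.transpose_mul, Matrix.transpose_mul, transpose_transpose, hinvT]
        rw [trace_mul_cycle]
        rw [Matrix.mul_assoc]
      rw [hB, Matrix.mul_add, trace_add, e3, hR, Matrix.mul_assoc]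
      ring
    have : V.trace = ((F * S₀⁻¹)ᵀ * H).trace := by linarith [htr1, htr2]
    exact this
  rw [hval] at hfinal
  exact hfinal
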